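/- Fix k ≥ 1 and work in H = (ℂ⁴)^{⊗k}. Let U be the unitary map U(v₁⊗···⊗v_k) = v₂⊗···⊗v_k⊗F₄*v₁ and Π_{L₁} = π₀⊗Id^{⊗(k-1)}, Π_{L₂} = π₃⊗Id^{⊗(k-1)}, Π_I = π_I⊗Id^{⊗(k-1)} with π_I = π₁+π₂. Define t_n = Π_{L₂} U (Π_I U)^{n-1} Π_{L₁} for n ≥ 1. Let ε = (0, ε₂,...,ε_k) ∈ {0,...,3}^k with ε₁ = 0, and suppose there is an index 2 ≤ ℓ ≤ k with ε_ℓ ∈ {0,3}; let ℓ₀ be the smallest such index. Then t_n|ε⟩ = 0 for all n ≠ ℓ₀ - 1, and ‖t_{ℓ₀-1}|ε⟩‖ = 0 if ε_{ℓ₀} = 0 while ‖t_{ℓ₀-1}|ε⟩‖ = 1 if ε_{ℓ₀} = 3. -/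

import Mathlib

open Complex

/-- the 4×4 discrete Fourier transform. -/
noncomputable def F4 : Matrix (Fin 4) (Fin 4) ℂ :=
  fun a b => (1 / 2 : ℂ) *
    Complex.exp (-(2 * Real.pi * Complex.I * ((a : ℕ) : ℂ) * ((b : ℕ) : ℂ)) / 4)

/-- the identification of `ℂ^{4^k}` with `(ℂ⁴)^{⊗ k}`: the simple tensor
`v 0 ⊗ ⋯ ⊗ v (k-1)` corresponds to this vector. -/
noncomputable def tens4 (k : ℕ) (v : Fin k → Fin 4 → ℂ) : Fin (4 ^ k) → ℂ :=
  fun j => ∏ i : Fin k,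
    v i ⟨j.val / 4 ^ (k - 1 - i.val) % 4, Nat.mod_lt _ (by norm_num)⟩

/-- the orthogonal projection onto the positions whose most significant base-4 digit
lies in `s` (acting only on the first qu4it). -/
noncomputable def projDigit (k : ℕ) (s : Finset (Fin 4)) :
    Matrix (Fin (4 ^ k)) (Fin (4 ^ k)) ℂ :=
  Matrix.diagonal fun j =>
    if (⟨j.val / 4 ^ (k - 1) % 4, Nat.mod_lt _ (by norm_num)⟩ : Fin 4) ∈ s then 1 else 0

/-- the sequence of states obtained by shifting digits. -/
noncomputable def vseq (k : ℕ) (εs : Fin k → Fin 4) (m : ℕ) : Fin k → Fin 4 → ℂ :=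
  fun i => if h : i.val + m < k then Pi.single (εs ⟨i.val + m, h⟩) 1
    else F4.conjTranspose.mulVec (Pi.single (εs ⟨(i.val + m) % k, Nat.mod_lt _ i.pos⟩) 1)

lemma vseq_zero (k : ℕ) (εs : Fin k → Fin 4) :
    vseq k εs 0 = fun i => Pi.single (εs i) 1 := by
  funext i
  simp [vseq, i.isLt]

lemma vseq_head (k : ℕ) (hk : 1 ≤ k) (εs : Fin k → Fin 4) (m : ℕ) (hm : m < k) :
    vseq k εs m ⟨0, hk⟩ = Pi.single (εs ⟨m, hm⟩) 1 := by
  simp [vseq, hm]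

lemma tens4_eq_zero (k : ℕ) (hk : 1 ≤ k) (v : Fin k → Fin 4 → ℂ) (a : Fin 4)
    (hv : v ⟨0, hk⟩ = Pi.single a 1) (j : Fin (4 ^ k))
    (hd : (⟨j.val / 4 ^ (k - 1) % 4, Nat.mod_lt _ (by norm_num)⟩ : Fin 4) ≠ a) :
    tens4 k v j = 0 := by
  apply Finset.prod_eq_zero (Finset.mem_univ (⟨0, hk⟩ : Fin k))
  rw [hv]
  exact Pi.single_eq_of_ne hd 1

lemma projDigit_mulVec (k : ℕ) (hk : 1 ≤ k) (s : Finset (Fin 4))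
    (v : Fin k → Fin 4 → ℂ) (a : Fin 4) (hv : v ⟨0, hk⟩ = Pi.single a 1) :
    (projDigit k s).mulVec (tens4 k v) = if a ∈ s then tens4 k v else 0 := by
  funext j
  simp only [projDigit, Matrix.mulVec_diagonal]
  by_cases hd : (⟨j.val / 4 ^ (k - 1) % 4, Nat.mod_lt _ (by norm_num)⟩ : Fin 4) = a
  · rw [hd]
    split_ifs with hs
    · rw [one_mul]
    · rw [zero_mul, Pi.zero_apply]
  · rw [tens4_eq_zero k hk v a hv j hd, mul_zero]
    split_ifs with hs
    · exact (tens4_eq_zero k hk v a hv j hd).symm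
    · rfl

lemma vseq_step (k : ℕ) (εs : Fin k → Fin 4)
    (U : Matrix (Fin (4 ^ k)) (Fin (4 ^ k)) ℂ)
    (hU : ∀ v : Fin k → Fin 4 → ℂ,
      U.mulVec (tens4 k v)
        = tens4 k (fun i =>
            if h : i.val + 1 < k then v ⟨i.val + 1, h⟩
            else F4.conjTranspose.mulVec (v ⟨0, i.pos⟩)))
    (m : ℕ) (hm : m < k) :
    U.mulVec (tens4 k (vseq k εs m)) = tens4 k (vseq k εs (m + 1)) := by
  have eqv : ∀ (a b : ℕ) (hab : a = b) (ha : a < k) (hb : b < k),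
      εs ⟨a, ha⟩ = εs ⟨b, hb⟩ := by
    intro a b hab ha hb
    subst hab
    rfl
  rw [hU]
  refine congrArg (tens4 k) (funext fun i => ?_)
  by_cases h : i.val + 1 < k
  · rw [dif_pos h]
    show vseq k εs m ⟨i.val + 1, h⟩ = vseq k εs (m + 1) i
    simp only [vseq]
    by_cases h2 : i.val + (m + 1) < k
    · rw [dif_pos (show i.val + 1 + m < k by omega), dif_pos h2]
      exact congrArg (fun x : Fin 4 => Pi.single x (1 : ℂ)) (eqv _ _ (by omega) _ _)
    · rw [dif_neg (show ¬ i.val + 1 + m < k by omega), dif_neg h2]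
      refine congrArg (fun x : Fin 4 => F4.conjTranspose.mulVec (Pi.single x (1 : ℂ)))
        (eqv _ _ ?_ _ _)
      rw [show i.val + 1 + m = i.val + (m + 1) from by omega]
  · rw [dif_neg h]
    show F4.conjTranspose.mulVec (vseq k εs m ⟨0, i.pos⟩) = vseq k εs (m + 1) i
    simp only [vseq]
    rw [dif_pos (show 0 + m < k by omega), dif_neg (show ¬ i.val + (m + 1) < k by omega)]
    refine congrArg (fun x : Fin 4 => F4.conjTranspose.mulVec (Pi.single x (1 : ℂ)))
      (eqv _ _ ?_ _ _)
    have h1 : i.val + (m + 1) = k + m := by omega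
    rw [h1, Nat.add_mod_left, Nat.mod_eq_of_lt hm]
    omega

lemma abs_F4_entry (a b : Fin 4) : ‖F4 a b‖ = 1 / 2 := by
  have h : (-(2 * Real.pi * Complex.I * ((a : ℕ) : ℂ) * ((b : ℕ) : ℂ)) / 4 : ℂ)
      = ((-(2 * Real.pi * (a : ℕ) * (b : ℕ)) / 4 : ℝ) : ℂ) * Complex.I := by
    push_cast
    ring
  rw [F4, norm_mul, h, Complex.norm_exp_ofReal_mul_I, mul_one]
  norm_num

lemma sum_abs_sq_single (a : Fin 4) :
    ∑ b : Fin 4, ‖(Pi.single a 1 : Fin 4 → ℂ) b‖ ^ 2 = 1 := by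
  have h : ∀ b : Fin 4, ‖(Pi.single a 1 : Fin 4 → ℂ) b‖ ^ 2
      = if b = a then 1 else 0 := by
    intro b
    by_cases hb : b = a
    · subst hb; simp
    · simp [Pi.single_eq_of_ne hb, hb]
  simp_rw [h]
  simp

lemma sum_abs_sq_F4 (a : Fin 4) :
    ∑ b : Fin 4, ‖F4.conjTranspose.mulVec (Pi.single a (1 : ℂ)) b‖ ^ 2 = 1 := by
  have h : ∀ b : Fin 4, ‖F4.conjTranspose.mulVec (Pi.single a (1 : ℂ)) b‖ ^ 2
      = 1 / 4 := by
    intro b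
    rw [Matrix.mulVec_single_one]
    simp only [Matrix.col_apply, Matrix.conjTranspose_apply]
    rw [show star (F4 a b) = (starRingEnd ℂ) (F4 a b) from rfl, Complex.norm_conj,
      abs_F4_entry]
    norm_num
  simp_rw [h]
  norm_num

lemma sum_vseq_component (k : ℕ) (εs : Fin k → Fin 4) (m : ℕ) (i : Fin k) :
    ∑ b : Fin 4, ‖vseq k εs m i b‖ ^ 2 = 1 := by
  rw [vseq]
  by_cases h : i.val + m < k
  · rw [dif_pos h]; exact sum_abs_sq_single _
  · rw [dif_neg h]; exact sum_abs_sq_F4 _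

lemma tens4_norm_sq (k : ℕ) (v : Fin k → Fin 4 → ℂ) :
    ∑ j : Fin (4 ^ k), ‖tens4 k v j‖ ^ 2
      = ∏ i : Fin k, ∑ b : Fin 4, ‖v i b‖ ^ 2 := by
  rw [← Equiv.sum_comp (finFunctionFinEquiv : (Fin k → Fin 4) ≃ Fin (4 ^ k))]
  have key : ∀ f : Fin k → Fin 4,
      ‖tens4 k v (finFunctionFinEquiv f)‖ ^ 2
        = ∏ i : Fin k, ‖v (Fin.rev i) (f i)‖ ^ 2 := by
    intro f
    have digit : ∀ i : Fin k,
        (⟨(finFunctionFinEquiv f : Fin (4 ^ k)).val / 4 ^ (k - 1 - i.val) % 4,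
          Nat.mod_lt _ (by norm_num)⟩ : Fin 4) = f i.rev := by
      intro i
      have h := finFunctionFinEquiv_symm_apply_val (finFunctionFinEquiv f) i.rev
      rw [Equiv.symm_apply_apply] at h
      apply Fin.ext
      rw [h, Fin.val_rev, show k - (i.val + 1) = k - 1 - i.val from by omega]
    have h1 : tens4 k v (finFunctionFinEquiv f) = ∏ i : Fin k, v i (f i.rev) := by
      unfold tens4
      exact Finset.prod_congr rfl fun i _ => congrArg (v i) (digit i)
    rw [h1, norm_prod, ← Finset.prod_pow]
    rw [← Equiv.prod_comp (Fin.revPerm : Equiv.Perm (Fin k))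
      (fun i => ‖v (Fin.rev i) (f i)‖ ^ 2)]
    exact Finset.prod_congr rfl fun i _ => by simp [Fin.rev_rev]
  simp_rw [key]
  rw [← Fintype.prod_sum (fun i b => ‖v (Fin.rev i) b‖ ^ 2)]
  exact Equiv.prod_comp (Fin.revPerm : Equiv.Perm (Fin k))
    (fun i => ∑ b : Fin 4, ‖v i b‖ ^ 2)

theorem stmt17 (k : ℕ) (hk : 1 ≤ k)
    (U : Matrix (Fin (4 ^ k)) (Fin (4 ^ k)) ℂ)
    -- U is the Walsh quantization: it shifts the qu4its, applying F₄* to the first one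
    (hU : ∀ v : Fin k → Fin 4 → ℂ,
      U.mulVec (tens4 k v)
        = tens4 k (fun i =>
            if h : i.val + 1 < k then v ⟨i.val + 1, h⟩
            else F4.conjTranspose.mulVec (v ⟨0, i.pos⟩)))
    (εs : Fin k → Fin 4) (hε0 : εs ⟨0, hk⟩ = 0)
    (ℓ₀ : ℕ) (hℓ₀2 : 2 ≤ ℓ₀) (hℓ₀k : ℓ₀ ≤ k)
    -- ℓ₀ is the smallest index (between 2 and k) with ε_{ℓ₀} ∈ {0, 3}
    (hval : εs ⟨ℓ₀ - 1, by omega⟩ = 0 ∨ εs ⟨ℓ₀ - 1, by omega⟩ = 3)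
    (hmin : ∀ ℓ : ℕ, ∀ _h1 : 2 ≤ ℓ, ∀ _h2 : ℓ < ℓ₀,
      εs ⟨ℓ - 1, by omega⟩ = 1 ∨ εs ⟨ℓ - 1, by omega⟩ = 2) :
    -- t_n |ε⟩ = 0 for every n ≠ ℓ₀ - 1
    (∀ n : ℕ, 1 ≤ n → n ≠ ℓ₀ - 1 →
      (projDigit k {3} * U * (projDigit k {1, 2} * U) ^ (n - 1)
        * projDigit k {0}).mulVec (tens4 k (fun i => Pi.single (εs i) 1)) = 0) ∧
    -- the norm of t_{ℓ₀-1} |ε⟩ is 0 if ε_{ℓ₀} = 0, and 1 if ε_{ℓ₀} = 3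
    (∑ j : Fin (4 ^ k),
        ‖(((projDigit k {3} * U * (projDigit k {1, 2} * U) ^ (ℓ₀ - 2)
            * projDigit k {0}).mulVec (tens4 k (fun i => Pi.single (εs i) 1))) j)‖ ^ 2
      = if εs ⟨ℓ₀ - 1, by omega⟩ = 0 then 0 else 1) := by
  have hx : tens4 k (fun i => Pi.single (εs i) 1) = tens4 k (vseq k εs 0) := by
    rw [vseq_zero]
  -- the chain lemma
  have key : ∀ m : ℕ, m ≤ ℓ₀ - 2 →
      ((projDigit k {1, 2} * U) ^ m).mulVec (tens4 k (vseq k εs 0))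
        = tens4 k (vseq k εs m) := by
    intro m
    induction m with
    | zero => intro _; rw [pow_zero, Matrix.one_mulVec]
    | succ m ih =>
      intro h
      rw [pow_succ', ← Matrix.mulVec_mulVec, ih (by omega), ← Matrix.mulVec_mulVec,
        vseq_step k εs U hU m (by omega),
        projDigit_mulVec k hk _ _ (εs ⟨m + 1, by omega⟩) (vseq_head k hk εs (m + 1) (by omega))]
      have hm12 : εs ⟨m + 1, by omega⟩ = 1 ∨ εs ⟨m + 1, by omega⟩ = 2 :=
        hmin (m + 2) (by omega) (by omega)
      rw [if_pos (by rcases hm12 with h' | h' <;> rw [h'] <;> decide)]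
  have hP0 : (projDigit k {0}).mulVec (tens4 k (vseq k εs 0)) = tens4 k (vseq k εs 0) := by
    rw [projDigit_mulVec k hk _ _ (εs ⟨0, hk⟩) (vseq_head k hk εs 0 hk),
      if_pos (by rw [hε0]; decide)]
  constructor
  · intro n hn hne
    rw [hx, ← Matrix.mulVec_mulVec, hP0, ← Matrix.mulVec_mulVec, ← Matrix.mulVec_mulVec]
    by_cases hcase : n < ℓ₀ - 1
    · rw [key (n - 1) (by omega), vseq_step k εs U hU (n - 1) (by omega),
        show n - 1 + 1 = n from by omega,
        projDigit_mulVec k hk _ _ (εs ⟨n, by omega⟩) (vseq_head k hk εs n (by omega))]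
      have hn12 : εs ⟨n, by omega⟩ = 1 ∨ εs ⟨n, by omega⟩ = 2 :=
        hmin (n + 1) (by omega) (by omega)
      rw [if_neg (by rcases hn12 with h' | h' <;> rw [h'] <;> decide)]
    · -- n ≥ ℓ₀
      have hge : ℓ₀ ≤ n := by omega
      rw [show n - 1 = (n - ℓ₀) + (ℓ₀ - 1) from by omega, pow_add, ← Matrix.mulVec_mulVec,
        show ℓ₀ - 1 = (ℓ₀ - 2) + 1 from by omega, pow_succ', ← Matrix.mulVec_mulVec,
        key (ℓ₀ - 2) le_rfl, ← Matrix.mulVec_mulVec,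
        vseq_step k εs U hU (ℓ₀ - 2) (by omega),
        show ℓ₀ - 2 + 1 = ℓ₀ - 1 from by omega,
        projDigit_mulVec k hk _ _ (εs ⟨ℓ₀ - 1, by omega⟩)
          (vseq_head k hk εs (ℓ₀ - 1) (by omega))]
      rw [if_neg (by rcases hval with h' | h' <;> rw [h'] <;> decide)]
      simp [Matrix.mulVec_zero]
  · rw [hx, ← Matrix.mulVec_mulVec, hP0, ← Matrix.mulVec_mulVec, ← Matrix.mulVec_mulVec,
      key (ℓ₀ - 2) le_rfl, vseq_step k εs U hU (ℓ₀ - 2) (by omega),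
      show ℓ₀ - 2 + 1 = ℓ₀ - 1 from by omega,
      projDigit_mulVec k hk _ _ (εs ⟨ℓ₀ - 1, by omega⟩)
        (vseq_head k hk εs (ℓ₀ - 1) (by omega))]
    rcases hval with h' | h'
    · rw [h', if_neg (show (0 : Fin 4) ∉ ({3} : Finset (Fin 4)) from by decide),
        if_pos rfl]
      simp
    · rw [h', if_pos (show (3 : Fin 4) ∈ ({3} : Finset (Fin 4)) from by decide),
        if_neg (show ¬ (3 : Fin 4) = 0 from by decide)]
      rw [tens4_norm_sq]
      exact Finset.prod_eq_one fun i _ => sum_vseq_component k εs (ℓ₀ - 1) i
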